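/- Let K ≥ 2 and let v ∈ ℝ^K satisfy v_k ≠ v̄ for every k ∈ {1,…,K}, where v̄ = (1/K) Σ_{i=1}^K v_i. Then EvSoftmax is differentiable at v, and its partial derivatives are ∂EvSoftmax(v)_i/∂v_j = EvSoftmax(v)_i·(δ_{ij} − EvSoftmax(v)_j) for all i, j ∈ {1,…,K}, where δ_{ij} is the Kronecker delta. In particular, if EvSoftmax(v)_i = 0 or EvSoftmax(v)_j = 0 then ∂EvSoftmax(v)_i/∂v_j = 0. -/

import Mathlib

open Finset

/-- The ev-softmax function:
`EvSoftmax(v)_k = 𝟙{v_k ≥ v̄} e^{v_k} / ∑_l 𝟙{v_l ≥ v̄} e^{v_l}`,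
where `v̄` is the arithmetic mean of `v`. -/
noncomputable def evSoftmax {K : ℕ} (v : Fin K → ℝ) (k : Fin K) : ℝ :=
  (if (∑ i : Fin K, v i) / K ≤ v k then Real.exp (v k) else 0) /
    ∑ l : Fin K, (if (∑ i : Fin K, v i) / K ≤ v l then Real.exp (v l) else 0)

/-- Quotient rule for Fréchet derivatives of real-valued functions. -/
lemma hasFDerivAt_div_aux {E : Type*} [NormedAddCommGroup E] [NormedSpace ℝ E]
    {c d : E → ℝ} {c' d' : E →L[ℝ] ℝ} {x : E}
    (hc : HasFDerivAt c c' x) (hd : HasFDerivAt d d' x) (hx : d x ≠ 0) :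
    HasFDerivAt (fun y => c y / d y)
      ((d x)⁻¹ • c' - (c x / d x ^ 2) • d') x := by
  have hinv : HasFDerivAt (fun y => (d y)⁻¹) ((-(d x ^ 2)⁻¹) • d') x :=
    (hasDerivAt_inv hx).comp_hasFDerivAt x hd
  have hmul := hc.mul hinv
  have hfun : (fun y => c y / d y) = fun y => c y * (d y)⁻¹ := by
    funext y; rw [div_eq_mul_inv]
  rw [hfun]
  refine hmul.congr_fderiv ?_
  ext w
  simp only [ContinuousLinearMap.sub_apply, ContinuousLinearMap.add_apply,
    ContinuousLinearMap.smul_apply, smul_eq_mul]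
  ring

/-- If `K ≥ 2` and `v k ≠ v̄` for every `k`, then each component
of ev-softmax is differentiable at `v` with partial derivatives
`∂EvSoftmax(v)_i/∂v_j = EvSoftmax(v)_i (δ_{ij} - EvSoftmax(v)_j)`; in
particular the partial derivative vanishes whenever `EvSoftmax(v)_i = 0` or
`EvSoftmax(v)_j = 0`. -/
theorem evSoftmax_jacobian
    (K : ℕ) (hK : 2 ≤ K) (v : Fin K → ℝ)
    (hne : ∀ k, v k ≠ (∑ i : Fin K, v i) / K) :
    (∀ i : Fin K, DifferentiableAt ℝ (fun u : Fin K → ℝ => evSoftmax u i) v) ∧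
    (∀ i j : Fin K,
      fderiv ℝ (fun u : Fin K → ℝ => evSoftmax u i) v (Pi.single j 1)
        = evSoftmax v i * ((if i = j then (1 : ℝ) else 0) - evSoftmax v j)) ∧
    (∀ i j : Fin K, evSoftmax v i = 0 ∨ evSoftmax v j = 0 →
      fderiv ℝ (fun u : Fin K → ℝ => evSoftmax u i) v (Pi.single j 1) = 0) := by
  classical
  have hKpos : (0:ℕ) < K := lt_of_lt_of_le (by norm_num) hK
  set m : ℝ := (∑ i : Fin K, v i) / K with hm
  -- frozen numerators
  set N : Fin K → (Fin K → ℝ) → ℝ :=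
    fun k u => if m ≤ v k then Real.exp (u k) else 0 with hNdef
  set D : (Fin K → ℝ) → ℝ := fun u => ∑ l : Fin K, N l u with hDdef
  set c : Fin K → ℝ := fun k => if m ≤ v k then Real.exp (v k) else 0 with hcdef
  have hNv : ∀ k, N k v = c k := fun k => rfl
  -- positivity of the denominator
  have hex : ∃ k, m ≤ v k := by
    by_contra h
    push_neg at h
    have hsum : ∑ i : Fin K, v i < ∑ _i : Fin K, m := by
      apply Finset.sum_lt_sum_of_nonempty
      · exact Finset.univ_nonempty_iff.mpr ⟨⟨0, hKpos⟩⟩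
      · intro i _; exact h i
    have : (∑ i : Fin K, v i) < K * m := by
      simpa [Finset.sum_const, Finset.card_univ, nsmul_eq_mul] using hsum
    rw [hm] at this
    have hK0 : (K:ℝ) ≠ 0 := Nat.cast_ne_zero.mpr hKpos.ne'
    rw [mul_div_cancel₀ _ hK0] at this
    exact lt_irrefl _ this
  have hDpos : 0 < D v := by
    obtain ⟨k, hk⟩ := hex
    have h1 : 0 < N k v := by simp only [hNdef, if_pos hk]; exact Real.exp_pos _
    have h2 : ∀ l ∈ Finset.univ, (0:ℝ) ≤ N l v := by
      intro l _
      simp only [hNdef]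
      split <;> [exact (Real.exp_pos _).le; exact le_rfl]
    exact Finset.sum_pos' h2 ⟨k, Finset.mem_univ k, h1⟩
  have hDne : D v ≠ 0 := hDpos.ne'
  -- derivative of each numerator
  have hNfd : ∀ k, HasFDerivAt (N k)
      (c k • (ContinuousLinearMap.proj k : (Fin K → ℝ) →L[ℝ] ℝ)) v := by
    intro k
    by_cases hk : m ≤ v k
    · have h1 : HasFDerivAt (fun u : Fin K → ℝ => u k)
          (ContinuousLinearMap.proj k : (Fin K → ℝ) →L[ℝ] ℝ) v :=
        (ContinuousLinearMap.proj k : (Fin K → ℝ) →L[ℝ] ℝ).hasFDerivAt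
      have h2 := h1.exp
      simp only [hNdef, if_pos hk, hcdef]
      simpa using h2
    · simp only [hNdef, if_neg hk, hcdef]
      simpa using hasFDerivAt_const (0:ℝ) v
  have hDfd : HasFDerivAt D
      (∑ l : Fin K, c l • (ContinuousLinearMap.proj l : (Fin K → ℝ) →L[ℝ] ℝ)) v :=
    HasFDerivAt.fun_sum (fun l _ => hNfd l)
  -- the quotient and its derivative
  have hqfd : ∀ i, HasFDerivAt (fun u => N i u / D u)
      ((D v)⁻¹ • (c i • (ContinuousLinearMap.proj i : (Fin K → ℝ) →L[ℝ] ℝ))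
        - (N i v / D v ^ 2) •
          (∑ l : Fin K, c l • (ContinuousLinearMap.proj l : (Fin K → ℝ) →L[ℝ] ℝ))) v :=
    fun i => hasFDerivAt_div_aux (hNfd i) hDfd hDne
  -- eventual equality of evSoftmax with the frozen quotient
  have hev : ∀ᶠ u in nhds v, ∀ k : Fin K, ((∑ i : Fin K, u i) / (K:ℝ) ≤ u k ↔ m ≤ v k) := by
    rw [Filter.eventually_all]
    intro k
    have hcont : Continuous fun u : Fin K → ℝ => u k - (∑ i : Fin K, u i) / K := by
      apply Continuous.sub (continuous_apply k)
      exact (continuous_finset_sum _ fun i _ => continuous_apply i).div_const _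
    rcases lt_or_gt_of_ne (hne k) with hlt | hgt
    · have h0 : v k - m < 0 := sub_neg.mpr hlt
      have := (hcont.tendsto v).eventually (eventually_lt_nhds h0)
      filter_upwards [this] with u hu
      constructor
      · intro h; exact absurd (sub_nonneg.mpr h) (not_le.mpr hu)
      · intro h; exact absurd hlt (not_lt.mpr h)
    · have h0 : 0 < v k - m := sub_pos.mpr hgt
      have := (hcont.tendsto v).eventually (eventually_gt_nhds h0)
      filter_upwards [this] with u hu
      constructor
      · intro _; exact hgt.le
      · intro _; exact (sub_pos.mp hu).le
  have heq : ∀ i : Fin K,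
      (fun u : Fin K → ℝ => evSoftmax u i) =ᶠ[nhds v] fun u => N i u / D u := by
    intro i
    filter_upwards [hev] with u hu
    simp only [evSoftmax, hNdef, hDdef]
    congr 1
    · split_ifs with h1 h2 h2
      · rfl
      · exact absurd ((hu i).mp h1) h2
      · exact absurd ((hu i).mpr h2) h1
      · rfl
    · apply Finset.sum_congr rfl
      intro l _
      split_ifs with h1 h2 h2
      · rfl
      · exact absurd ((hu l).mp h1) h2
      · exact absurd ((hu l).mpr h2) h1
      · rfl
  -- differentiability
  have hdiff : ∀ i, DifferentiableAt ℝ (fun u : Fin K → ℝ => evSoftmax u i) v := by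
    intro i
    exact (hqfd i).differentiableAt.congr_of_eventuallyEq (heq i)
  -- value of evSoftmax at v
  have hval : ∀ k, evSoftmax v k = c k / D v := fun k => rfl
  -- the derivative formula
  have hmain : ∀ i j : Fin K,
      fderiv ℝ (fun u : Fin K → ℝ => evSoftmax u i) v (Pi.single j 1)
        = evSoftmax v i * ((if i = j then (1 : ℝ) else 0) - evSoftmax v j) := by
    intro i j
    have hfd : fderiv ℝ (fun u : Fin K → ℝ => evSoftmax u i) v
        = fderiv ℝ (fun u => N i u / D u) v := (heq i).fderiv_eq
    rw [hfd, (hqfd i).fderiv]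
    have hproj : ∀ k : Fin K,
        (ContinuousLinearMap.proj k : (Fin K → ℝ) →L[ℝ] ℝ) (Pi.single j 1)
          = if k = j then (1:ℝ) else 0 := by
      intro k
      simp [ContinuousLinearMap.proj_apply, Pi.single_apply]
    simp only [ContinuousLinearMap.sub_apply, ContinuousLinearMap.smul_apply,
      ContinuousLinearMap.coe_sum', Finset.sum_apply, smul_eq_mul, hproj, hval, hNv]
    have hs : ∑ x : Fin K, c x * (if x = j then (1:ℝ) else 0) = c j := by
      simp
    rw [hs]
    have hD2 : D v ^ 2 ≠ 0 := pow_ne_zero _ hDne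
    by_cases hij : i = j
    · subst hij
      simp only [if_pos rfl]
      field_simp
    · simp only [if_neg hij, if_neg (fun h => hij h)]
      field_simp
  refine ⟨hdiff, hmain, ?_⟩
  intro i j h
  rw [hmain i j]
  rcases h with h | h
  · rw [h, zero_mul]
  · by_cases hij : i = j
    · subst hij; rw [h, zero_mul]
    · rw [h, if_neg hij, sub_zero, mul_zero]
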